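/- Let t be a β-normal λ-term. Then ⊢_F t : Bool holds if and only if t = λx λy y or t = λx λy x. -/

import Mathlib

set_option maxHeartbeats 1000000


/-- Untyped λ-terms in de Bruijn representation. -/
inductive Trm : Type
  | var : ℕ → Trm
  | app : Trm → Trm → Trm
  | lam : Trm → Trm
  deriving DecidableEq

namespace Trm

/-- The set of free variables of a term (as de Bruijn indices). -/
def fv : Trm → Set ℕ
  | var n => {n}
  | app u v => fv u ∪ fv v
  | lam u => {n | n + 1 ∈ fv u}

/-- A term is closed if it has no free variables. -/
def Closed (t : Trm) : Prop := fv t = ∅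

/-- λI-terms: abstraction is allowed only on variables occurring free in the body. -/
inductive IsLI : Trm → Prop
  | var (n : ℕ) : IsLI (var n)
  | app {u v : Trm} : IsLI u → IsLI v → IsLI (app u v)
  | lam {u : Trm} : IsLI u → 0 ∈ fv u → IsLI (lam u)

/-- Lifting of free variables ≥ d. -/
def lift (d : ℕ) : Trm → Trm
  | var n => if n < d then var n else var (n + 1)
  | app u v => app (lift d u) (lift d v)
  | lam u => lam (lift (d + 1) u)

def liftTimes (k : ℕ) (t : Trm) : Trm := (lift 0)^[k] t

/-- Capture-avoiding substitution of the k-th free variable. -/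
def subst : Trm → ℕ → Trm → Trm
  | var n, k, v => if n < k then var n else if n = k then liftTimes k v else var (n - 1)
  | app a b, k, v => app (subst a k v) (subst b k v)
  | lam a, k, v => lam (subst a (k + 1) v)

end Trm

/-- One step of β-reduction. -/
inductive Beta : Trm → Trm → Prop
  | beta {u v : Trm} : Beta (.app (.lam u) v) (u.subst 0 v)
  | appL {u u' v : Trm} : Beta u u' → Beta (.app u v) (.app u' v)
  | appR {u v v' : Trm} : Beta v v' → Beta (.app u v) (.app u v')
  | lam {u u' : Trm} : Beta u u' → Beta (.lam u) (.lam u')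

/-- One step of η-reduction: λx (u)x → u when x ∉ Fv(u). -/
inductive Eta : Trm → Trm → Prop
  | eta (u : Trm) : Eta (.lam (.app (u.lift 0) (.var 0))) u
  | appL {u u' v : Trm} : Eta u u' → Eta (.app u v) (.app u' v)
  | appR {u v v' : Trm} : Eta v v' → Eta (.app u v) (.app u v')
  | lam {u u' : Trm} : Eta u u' → Eta (.lam u) (.lam u')

/-- β-reduction (reflexive-transitive closure). -/
def BetaStar : Trm → Trm → Prop := Relation.ReflTransGen Beta

/-- βη-reduction (reflexive-transitive closure of the union of β and η). -/
def BetaEtaStar : Trm → Trm → Prop := Relation.ReflTransGen (fun a b => Beta a b ∨ Eta a b)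

/-- η-reduction (reflexive-transitive closure). -/
def EtaStar : Trm → Trm → Prop := Relation.ReflTransGen Eta

/-- A term is β-normal iff it contains no β-redex. -/
def BetaNormal (t : Trm) : Prop := ∀ u, ¬ Beta t u

/-- A term is βη-normal iff it contains neither a β-redex nor an η-redex. -/
def BetaEtaNormal (t : Trm) : Prop := ∀ u, ¬ Beta t u ∧ ¬ Eta t u

/-- A term is strongly normalizable iff every β-reduction sequence from it is finite. -/
def StronglyNormalizable (t : Trm) : Prop :=
  ¬ ∃ f : ℕ → Trm, f 0 = t ∧ ∀ n, Beta (f n) (f (n + 1))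

/-- Types of system F in de Bruijn representation. -/
inductive Ty : Type
  | var : ℕ → Ty
  | arr : Ty → Ty → Ty
  | all : Ty → Ty
  deriving DecidableEq

namespace Ty

/-- Free type variables. -/
def tfv : Ty → Set ℕ
  | var n => {n}
  | arr A B => tfv A ∪ tfv B
  | all A => {n | n + 1 ∈ tfv A}

/-- Lifting of free type variables ≥ d. -/
def tlift (d : ℕ) : Ty → Ty
  | var n => if n < d then var n else var (n + 1)
  | arr A B => arr (tlift d A) (tlift d B)
  | all A => all (tlift (d + 1) A)

def tliftTimes (k : ℕ) (A : Ty) : Ty := (tlift 0)^[k] A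

/-- Substitution of the k-th free type variable. -/
def tsubst : Ty → ℕ → Ty → Ty
  | var n, k, G => if n < k then var n else if n = k then tliftTimes k G else var (n - 1)
  | arr A B, k, G => arr (tsubst A k G) (tsubst B k G)
  | all A, k, G => all (tsubst A (k + 1) G)

/-- Proper types: in every subtype ∀X E, the variable X occurs free in E. -/
def Proper : Ty → Prop
  | var _ => True
  | arr A B => Proper A ∧ Proper B
  | all A => Proper A ∧ 0 ∈ tfv A

/-- Closed types. -/
def ClosedTy (A : Ty) : Prop := tfv A = ∅

end Ty

/-- Typing judgments of system F (restricted to proper types: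
the rule (∀e) requires X free in A and instantiates at proper types only). -/
inductive Typing : List Ty → Trm → Ty → Prop
  | ax {Γ : List Ty} {n : ℕ} {A : Ty} :
      Γ[n]? = some A → (∀ B ∈ Γ, B.Proper) → Typing Γ (.var n) A
  | arrI {Γ : List Ty} {A B : Ty} {t : Trm} :
      A.Proper → Typing (A :: Γ) t B → Typing Γ (.lam t) (.arr A B)
  | arrE {Γ : List Ty} {A B : Ty} {u v : Trm} :
      Typing Γ u (.arr A B) → Typing Γ v A → Typing Γ (.app u v) B
  | allI {Γ : List Ty} {A : Ty} {t : Trm} :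
      0 ∈ Ty.tfv A → Typing (Γ.map (Ty.tlift 0)) t A → Typing Γ t (.all A)
  | allE {Γ : List Ty} {A : Ty} {t : Trm} (G : Ty) :
      G.Proper → 0 ∈ Ty.tfv A → Typing Γ t (.all A) → Typing Γ t (A.tsubst 0 G)

/-- The type Bool = ∀X {X → (X → X)}. -/
def Bool' : Ty := .all (.arr (.var 0) (.arr (.var 0) (.var 0)))

namespace Ty

theorem tlift_tlift (C : Ty) : ∀ (d e : ℕ), e ≤ d →
    tlift (d+1) (tlift e C) = tlift e (tlift d C) := by
  induction C with
  | var n =>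
      intro d e h
      by_cases h1 : n < e <;> by_cases h2 : n < d <;>
        simp [tlift, h1, h2] <;> (try split_ifs) <;> (try rfl) <;> omega
  | arr A B ihA ihB => intro d e h; simp [tlift, ihA _ _ h, ihB _ _ h]
  | all A ih => intro d e h; simp only [tlift]; rw [ih (d+1) (e+1) (by omega)]

theorem tlift_tliftTimes (G : Ty) : ∀ (k d : ℕ), d ≤ k →
    tlift d (tliftTimes k G) = tliftTimes (k+1) G := by
  intro k
  induction k with
  | zero => intro d h; interval_cases d; simp [tliftTimes]
  | succ k ih =>
      intro d h
      rcases Nat.eq_zero_or_pos d with h0 | h0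
      · subst h0; simp [tliftTimes, Function.iterate_succ_apply']
      · obtain ⟨d', rfl⟩ : ∃ d', d = d' + 1 := ⟨d - 1, by omega⟩
        have : tliftTimes (k+1) G = tlift 0 (tliftTimes k G) := by
          simp [tliftTimes, Function.iterate_succ_apply']
        rw [this, tlift_tlift _ _ _ (by omega : 0 ≤ d'), ih d' (by omega)]
        simp [tliftTimes, Function.iterate_succ_apply']

theorem tsubst_tlift (C : Ty) : ∀ (d k : ℕ) (G : Ty), d ≤ k →
    tsubst (tlift d C) (k+1) G = tlift d (tsubst C k G) := by
  induction C with
  | var n =>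
      intro d k G h
      by_cases h1 : n < d
      · simp [tlift, tsubst, h1, if_pos (show n < k+1 by omega), if_pos (show n < k by omega)]
        intro; omega
      · simp [tlift, h1, tsubst]
        rcases Nat.lt_trichotomy n k with h2 | h2 | h2
        · simp [if_pos (by omega : n + 1 < k + 1), if_pos h2, tlift, if_neg h1]
        · subst h2
          simp [if_neg (by omega : ¬ n + 1 < n + 1), if_neg (lt_irrefl n)]
          exact (tlift_tliftTimes G n d h).symm ▸ (tlift_tliftTimes G n d h).symm
        · simp [if_neg (by omega : ¬ n + 1 < k + 1), if_neg (by omega : ¬ n + 1 = k + 1),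
            if_neg (by omega : ¬ n < k), if_neg (by omega : ¬ n = k), tlift,
            if_neg (by omega : ¬ n - 1 < d)]
          omega
  | arr A B ihA ihB => intro d k G h; simp [tlift, tsubst, ihA _ _ _ h, ihB _ _ _ h]
  | all A ih => intro d k G h; simp only [tlift, tsubst]; rw [ih (d+1) (k+1) G (by omega)]

theorem tsubst_tlift_self (C : Ty) : ∀ (d : ℕ) (G : Ty), tsubst (tlift d C) d G = C := by
  induction C with
  | var n =>
      intro d G
      by_cases h1 : n < d <;> simp [tlift, tsubst, h1] <;> split_ifs <;> (try rfl) <;> omega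
  | arr A B ihA ihB => intro d G; simp [tlift, tsubst, ihA, ihB]
  | all A ih => intro d G; simp [tlift, tsubst, ih]

theorem tsubst_tliftTimes_lo (C : Ty) : ∀ (j m : ℕ) (G : Ty), 
    tsubst (tliftTimes j C) (j+m) G = tliftTimes j (tsubst C m G) := by
  intro j
  induction j with
  | zero => intro m G; simp [tliftTimes]
  | succ j ih =>
      intro m G
      have e : ∀ D, tliftTimes (j+1) D = tlift 0 (tliftTimes j D) := by
        intro D; simp [tliftTimes, Function.iterate_succ_apply']
      rw [e, e]
      have : j + 1 + m = (j + m) + 1 := by omega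
      rw [this, tsubst_tlift _ 0 (j+m) G (by omega), ih]

theorem tsubst_tliftTimes_hi (C : Ty) : ∀ (m i : ℕ) (G : Ty), i ≤ m →
    tsubst (tliftTimes (m+1) C) i G = tliftTimes m C := by
  intro m i
  induction i generalizing m with
  | zero =>
      intro G h
      have e : tliftTimes (m+1) C = tlift 0 (tliftTimes m C) := by
        simp [tliftTimes, Function.iterate_succ_apply']
      rw [e, tsubst_tlift_self]
  | succ i ih =>
      intro G h
      obtain ⟨m', rfl⟩ : ∃ m', m = m' + 1 := ⟨m - 1, by omega⟩
      have e : ∀ q, tliftTimes (q+1) C = tlift 0 (tliftTimes q C) := by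
        intro q; simp [tliftTimes, Function.iterate_succ_apply']
      rw [e, tsubst_tlift _ 0 i G (by omega), ih m' G (by omega), e]

theorem tsubst_tsubst (A : Ty) : ∀ (j m : ℕ) (G' G : Ty),
    tsubst (tsubst A j G') (j+m) G = tsubst (tsubst A (j+m+1) G) j (tsubst G' m G) := by
  induction A with
  | var n =>
      intro j m G' G
      rcases Nat.lt_trichotomy n j with h | h | h
      · simp only [tsubst, if_pos h, if_pos (by omega : n < j + m), if_pos (by omega : n < j+m+1)]
      · subst h
        simp [tsubst, if_neg (lt_irrefl n), if_pos (by omega : n < n + m + 1)]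
        rw [tsubst_tliftTimes_lo]
      · rcases Nat.lt_trichotomy n (j+m+1) with h2 | h2 | h2
        · simp only [tsubst, if_neg (by omega : ¬ n < j), if_neg (by omega : ¬ n = j), if_pos h2,
            if_pos (by omega : n - 1 < j + m)]
        · subst h2
          simp [tsubst, if_neg (by omega : ¬ j+m+1 < j), if_neg (by omega : ¬ j+m+1 = j),
            if_neg (by omega : ¬ j+m+1-1 < j+m), if_pos (by omega : j+m+1-1 = j+m)]
          rw [tsubst_tliftTimes_hi _ _ _ _ (by omega : j ≤ j + m)]
        · simp only [tsubst, if_neg (by omega : ¬ n < j), if_neg (by omega : ¬ n = j),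
            if_neg (by omega : ¬ n < j+m+1), if_neg (by omega : ¬ n = j+m+1),
            if_neg (by omega : ¬ n - 1 < j+m), if_neg (by omega : ¬ n - 1 = j+m),
            if_neg (by omega : ¬ n - 1 < j), if_neg (by omega : ¬ n - 1 = j)]
  | arr A B ihA ihB => intro j m G' G; simp [tsubst, ihA, ihB]
  | all A ih =>
      intro j m G' G
      simp only [tsubst]
      have := ih (j+1) m G' G
      rw [show j + m + 1 = (j+1) + m by omega, this]

theorem mem_tfv_tlift {n d : ℕ} {A : Ty} (h : n < d) (hm : n ∈ tfv A) :
    n ∈ tfv (tlift d A) := by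
  induction A generalizing n d with
  | var m => simp only [tfv, Set.mem_singleton_iff] at hm; subst hm; simp [tlift, if_pos h, tfv]
  | arr A B ihA ihB =>
      simp only [tfv, Set.mem_union] at hm ⊢
      rcases hm with hm | hm
      · exact Or.inl (ihA h hm)
      · exact Or.inr (ihB h hm)
  | all A ih =>
      simp only [tfv, Set.mem_setOf_eq] at hm ⊢
      exact ih (by omega : n + 1 < d + 1) hm

theorem mem_tfv_tsubst {n j : ℕ} {A G : Ty} (h : n < j) (hm : n ∈ tfv A) :
    n ∈ tfv (tsubst A j G) := by
  induction A generalizing n j with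
  | var m =>
      simp only [tfv, Set.mem_singleton_iff] at hm; subst hm
      simp [tsubst, if_pos h, tfv]
  | arr A B ihA ihB =>
      simp only [tfv, Set.mem_union] at hm ⊢
      rcases hm with hm | hm
      · exact Or.inl (ihA h hm)
      · exact Or.inr (ihB h hm)
  | all A ih =>
      simp only [tfv, Set.mem_setOf_eq] at hm ⊢
      exact ih (by omega : n + 1 < j + 1) hm

theorem proper_tlift {A : Ty} (h : Proper A) (d : ℕ) : Proper (tlift d A) := by
  induction A generalizing d with
  | var n => simp [tlift]; split_ifs <;> trivial
  | arr A B ihA ihB => exact ⟨ihA h.1 _, ihB h.2 _⟩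
  | all A ih => exact ⟨ih h.1 _, mem_tfv_tlift (by omega) h.2⟩

theorem proper_tliftTimes {A : Ty} (h : Proper A) (k : ℕ) : Proper (tliftTimes k A) := by
  induction k with
  | zero => simpa [tliftTimes] using h
  | succ k ih =>
      have : tliftTimes (k+1) A = tlift 0 (tliftTimes k A) := by
        simp [tliftTimes, Function.iterate_succ_apply']
      rw [this]; exact proper_tlift ih 0

theorem proper_tsubst {A G : Ty} (hA : Proper A) (hG : Proper G) (k : ℕ) :
    Proper (tsubst A k G) := by
  induction A generalizing k with
  | var n =>
      simp only [tsubst]; split_ifs <;> first | trivial | exact proper_tliftTimes hG k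
  | arr A B ihA ihB => exact ⟨ihA hA.1 _, ihB hA.2 _⟩
  | all A ih => exact ⟨ih hA.1 _, mem_tfv_tsubst (by omega) hA.2⟩

end Ty


/-- Type substitution lemma. -/
theorem Typing.tsubst_lemma {Γ : List Ty} {t : Trm} {A : Ty} (h : Typing Γ t A) :
    ∀ (k : ℕ) (G : Ty), G.Proper →
      Typing (Γ.map (fun C => C.tsubst k G)) t (A.tsubst k G) := by
  induction h with
  | ax hget hprop =>
      intro k G hG
      refine Typing.ax ?_ ?_
      · simp [List.getElem?_map, hget]
      · intro B hB
        simp only [List.mem_map] at hB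
        obtain ⟨C, hC, rfl⟩ := hB
        exact Ty.proper_tsubst (hprop C hC) hG k
  | arrI hA hB ih =>
      intro k G hG
      exact Typing.arrI (Ty.proper_tsubst hA hG k) (ih k G hG)
  | arrE hu hv ihu ihv =>
      intro k G hG
      exact Typing.arrE (ihu k G hG) (ihv k G hG)
  | @allI Γ' A' t' hfv hpre ih =>
      intro k G hG
      show Typing _ t' (Ty.all (A'.tsubst (k+1) G))
      refine Typing.allI (Ty.mem_tfv_tsubst (by omega) hfv) ?_
      have := ih (k+1) G hG
      have hctx : (Γ'.map (Ty.tlift 0)).map (fun C => C.tsubst (k+1) G)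
          = (Γ'.map (fun C => C.tsubst k G)).map (Ty.tlift 0) := by
        simp only [List.map_map]
        apply List.map_congr_left
        intro C _
        exact Ty.tsubst_tlift C 0 k G (by omega)
      rwa [hctx] at this
  | @allE Γ' A' t' G' hG' hfv hall ih =>
      intro k G hG
      have := ih k G hG
      simp only [Ty.tsubst] at this
      have h2 := Typing.allE (G := G'.tsubst k G) (Ty.proper_tsubst hG' hG k)
        (Ty.mem_tfv_tsubst (by omega) hfv) this
      have e := Ty.tsubst_tsubst A' 0 k G' G
      simp only [Nat.zero_add] at e
      rwa [← e] at h2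

/-- Substitution sequences. -/
abbrev TSub := List (ℕ × Ty)

def SM (σ : TSub) : Prop := ∀ p ∈ σ, Ty.Proper p.2

def smap (σ : TSub) (T : Ty) : Ty := σ.foldl (fun T p => T.tsubst p.1 p.2) T

def sup (σ : TSub) : TSub := σ.map (fun p => (p.1+1, p.2))

theorem smap_nil (T : Ty) : smap [] T = T := rfl

theorem smap_arr (σ : TSub) (A B : Ty) :
    smap σ (Ty.arr A B) = Ty.arr (smap σ A) (smap σ B) := by
  induction σ generalizing A B with
  | nil => rfl
  | cons p σ ih => simp only [smap, List.foldl_cons, Ty.tsubst]; exact ih _ _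

theorem smap_all (σ : TSub) (A : Ty) :
    smap σ (Ty.all A) = Ty.all (smap (sup σ) A) := by
  induction σ generalizing A with
  | nil => rfl
  | cons p σ ih => simp only [smap, sup, List.map_cons, List.foldl_cons, Ty.tsubst]; exact ih _

theorem smap_tsubst0 (σ : TSub) (A G : Ty) :
    smap σ (A.tsubst 0 G) = (smap (sup σ) A).tsubst 0 (smap σ G) := by
  induction σ generalizing A G with
  | nil => rfl
  | cons p σ ih =>
      simp only [smap, sup, List.map_cons, List.foldl_cons]
      rw [show (A.tsubst 0 G).tsubst p.1 p.2
          = (A.tsubst (p.1+1) p.2).tsubst 0 (G.tsubst p.1 p.2) by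
        simpa using Ty.tsubst_tsubst A 0 p.1 G p.2]
      exact ih _ _

theorem smap_up_tlift (σ : TSub) (C : Ty) :
    smap (sup σ) (Ty.tlift 0 C) = Ty.tlift 0 (smap σ C) := by
  induction σ generalizing C with
  | nil => rfl
  | cons p σ ih =>
      simp only [smap, sup, List.map_cons, List.foldl_cons]
      rw [Ty.tsubst_tlift C 0 p.1 p.2 (by omega)]
      exact ih _

theorem smap_mem_tfv {A : Ty} (σ : TSub) (h : 0 ∈ Ty.tfv A) : 0 ∈ Ty.tfv (smap (sup σ) A) := by
  induction σ generalizing A with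
  | nil => exact h
  | cons p σ ih =>
      simp only [smap, sup, List.map_cons, List.foldl_cons]
      exact ih (Ty.mem_tfv_tsubst (by omega) h)

theorem smap_proper {G : Ty} {σ : TSub} (hσ : SM σ) (hG : G.Proper) : (smap σ G).Proper := by
  induction σ generalizing G with
  | nil => exact hG
  | cons p σ ih =>
      simp only [smap, List.foldl_cons]
      exact ih (fun q hq => hσ q (List.mem_cons_of_mem _ hq))
        (Ty.proper_tsubst hG (hσ p (List.mem_cons_self)) _)

theorem SMup {σ : TSub} (hσ : SM σ) : SM (sup σ) := by
  intro p hp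
  simp only [sup, List.mem_map] at hp
  obtain ⟨q, hq, rfl⟩ := hp
  exact hσ q hq

theorem smap_concat (σ : TSub) (p : ℕ × Ty) (T : Ty) :
    smap (σ ++ [p]) T = (smap σ T).tsubst p.1 p.2 := by
  simp [smap, List.foldl_append]

/-- Iterated type substitution lemma. -/
theorem Typing.smap_lemma {Γ : List Ty} {t : Trm} {A : Ty} (h : Typing Γ t A)
    {σ : TSub} (hσ : SM σ) : Typing (Γ.map (smap σ)) t (smap σ A) := by
  induction σ generalizing Γ A with
  | nil =>
      have e : smap ([] : TSub) = id := funext (fun T => rfl)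
      rw [e, List.map_id]; exact h
  | cons p σ ih =>
      have h1 := Typing.tsubst_lemma h p.1 p.2 (hσ p (List.mem_cons_self))
      have h2 := ih h1 (fun q hq => hσ q (List.mem_cons_of_mem _ hq))
      simp only [List.map_map] at h2
      exact h2


/-- Top-level instantiation chains. -/
inductive TI : Ty → Ty → Prop
  | refl (A : Ty) : TI A A
  | step {A G Z : Ty} : 0 ∈ Ty.tfv A → G.Proper → TI (A.tsubst 0 G) Z → TI (Ty.all A) Z

/-- Neutral terms: a variable applied to arguments. -/
inductive Neutral : Trm → Prop
  | var (n : ℕ) : Neutral (.var n)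
  | app {a b : Trm} : Neutral a → Neutral (.app a b)

theorem tlift0_ne_var0 (H : Ty) : Ty.tlift 0 H ≠ Ty.var 0 := by
  cases H <;> simp [Ty.tlift]

/-- Generation lemma for abstractions. -/
theorem ML {Γ : List Ty} {t : Trm} {F : Ty} (h : Typing Γ t F) :
    ∀ u : Trm, t = .lam u → ∀ σ : TSub, SM σ → ∀ P Q : Ty,
      TI (smap σ F) (.arr P Q) → Typing (P :: Γ.map (smap σ)) u Q := by
  induction h with
  | ax _ _ => intro u hu; exact absurd hu (by simp)
  | arrE _ _ _ _ => intro u hu; exact absurd hu (by simp)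
  | @arrI Γ' A B t' hA hT ih =>
      intro u hu σ hσ P Q hTI
      obtain rfl : t' = u := by injection hu
      rw [smap_arr] at hTI
      cases hTI
      have := Typing.smap_lemma hT hσ
      simpa using this
  | @allI Γ' A t' hfv hT ih =>
      intro u hu σ hσ P Q hTI
      rw [smap_all] at hTI
      cases hTI with
      | @step _ G _ h0 hG hTI' =>
          rw [show (smap (sup σ) A).tsubst 0 G = smap (sup σ ++ [(0, G)]) A by
            rw [smap_concat]] at hTI'
          have hσ' : SM (sup σ ++ [(0, G)]) := by
            intro p hp
            rcases List.mem_append.1 hp with hp | hp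
            · exact SMup hσ p hp
            · simp at hp; subst hp; exact hG
          have hres := ih u hu _ hσ' P Q hTI'
          have hctx : (Γ'.map (Ty.tlift 0)).map (smap (sup σ ++ [(0, G)]))
              = Γ'.map (smap σ) := by
            rw [List.map_map]
            apply List.map_congr_left
            intro C _
            show smap (sup σ ++ [(0, G)]) (Ty.tlift 0 C) = smap σ C
            rw [smap_concat, smap_up_tlift]
            exact Ty.tsubst_tlift_self _ 0 G
          rwa [hctx] at hres
  | @allE Γ' A t' G' hG' hfv hT ih =>
      intro u hu σ hσ P Q hTI
      rw [smap_tsubst0] at hTI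
      have hTI2 : TI (smap σ (Ty.all A)) (.arr P Q) := by
        rw [smap_all]
        exact TI.step (smap_mem_tfv σ hfv) (smap_proper hσ hG') hTI
      exact ih u hu σ hσ P Q hTI2

def Bad (F : Ty) : Prop := (∃ c, F = Ty.var c) ∨ F = Ty.all (Ty.var 0)

/-- An abstraction never has a variable type nor the type ∀X X. -/
theorem MLBad {Γ : List Ty} {t : Trm} {F : Ty} (h : Typing Γ t F) :
    ∀ u : Trm, t = .lam u → ∀ σ : TSub, SM σ → ¬ Bad (smap σ F) := by
  induction h with
  | ax _ _ => intro u hu; exact absurd hu (by simp)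
  | arrE _ _ _ _ => intro u hu; exact absurd hu (by simp)
  | arrI hA hT ih =>
      intro u hu σ hσ hb
      rw [smap_arr] at hb
      rcases hb with ⟨c, hc⟩ | hc <;> cases hc
  | @allI Γ' A t' hfv hT ih =>
      intro u hu σ hσ hb
      rw [smap_all] at hb
      rcases hb with ⟨c, hc⟩ | hc
      · cases hc
      · have he : smap (sup σ) A = Ty.var 0 := by injection hc
        exact ih u hu (sup σ) (SMup hσ) (Or.inl ⟨0, he⟩)
  | @allE Γ' A t' G' hG' hfv hT ih =>
      intro u hu σ hσ hb
      rw [smap_tsubst0] at hb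
      obtain ⟨T, hTdef⟩ : ∃ T, smap (sup σ) A = T := ⟨_, rfl⟩
      rw [hTdef] at hb
      have hT0 : T ≠ Ty.var 0 := by
        intro he
        exact ih u hu σ hσ (by rw [smap_all, hTdef, he]; exact Or.inr rfl)
      have hTf : 0 ∈ Ty.tfv T := hTdef ▸ smap_mem_tfv σ hfv
      cases T with
      | var m =>
          have : m = 0 := by
            simp only [Ty.tfv, Set.mem_singleton_iff] at hTf
            omega
          exact hT0 (by rw [this])
      | arr A1 A2 =>
          simp only [Ty.tsubst] at hb
          rcases hb with ⟨c, hc⟩ | hc <;> cases hc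
      | all A1 =>
          simp only [Ty.tsubst] at hb
          rcases hb with ⟨c, hc⟩ | hc
          · cases hc
          · have h1 : A1.tsubst 1 (smap σ G') = Ty.var 0 := by injection hc
            simp only [Ty.tfv, Set.mem_setOf_eq] at hTf
            cases A1 with
            | var m =>
                have hm : m = 1 := by
                  simp only [Ty.tfv, Set.mem_singleton_iff] at hTf
                  omega
                subst hm
                have h2 : Ty.tliftTimes 1 (smap σ G') = Ty.var 0 := by
                  simpa [Ty.tsubst] using h1
                rw [show Ty.tliftTimes 1 (smap σ G') = Ty.tlift 0 (smap σ G') by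
                  simp [Ty.tliftTimes]] at h2
                exact tlift0_ne_var0 _ h2
            | arr _ _ => simp [Ty.tsubst] at h1
            | all _ => simp [Ty.tsubst] at h1

/-- Neutral terms in an atomic context are variables whose type is in the context. -/
theorem NEU {Γ : List Ty} {t : Trm} {F : Ty} (h : Typing Γ t F) :
    Neutral t → (∀ C ∈ Γ, ∃ c, C = Ty.var c) → (∃ n, t = .var n) ∧ F ∈ Γ := by
  induction h with
  | @ax Γ' n A hget _ =>
      intro _ _
      exact ⟨⟨n, rfl⟩, List.mem_of_getElem? hget⟩
  | arrI _ _ _ => intro hne; cases hne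
  | @arrE Γ' A B a b hA hB ihA ihB =>
      intro hne hatom
      cases hne with
      | app hna =>
          obtain ⟨_, hmem⟩ := ihA hna hatom
          obtain ⟨c, hc⟩ := hatom _ hmem
          cases hc
  | @allI Γ' A t' hfv hT ih =>
      intro hne hatom
      have hatom' : ∀ C ∈ Γ'.map (Ty.tlift 0), ∃ c, C = Ty.var c := by
        intro C hC
        simp only [List.mem_map] at hC
        obtain ⟨D, hD, rfl⟩ := hC
        obtain ⟨c, rfl⟩ := hatom D hD
        exact ⟨c + 1, by simp [Ty.tlift]⟩
      obtain ⟨hv, hmem⟩ := ih hne hatom'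
      simp only [List.mem_map] at hmem
      obtain ⟨D, hD, rfl⟩ := hmem
      obtain ⟨c, rfl⟩ := hatom D hD
      simp [Ty.tlift, Ty.tfv] at hfv
  | @allE Γ' A t' G' hG' hfv hT ih =>
      intro hne hatom
      obtain ⟨hv, hmem⟩ := ih hne hatom
      obtain ⟨c, hc⟩ := hatom _ hmem
      cases hc

/-- Free variables of typable terms are bounded by the context length. -/
theorem FVL {Γ : List Ty} {t : Trm} {F : Ty} (h : Typing Γ t F) :
    ∀ n ∈ Trm.fv t, n < Γ.length := by
  induction h with
  | @ax Γ' m A hget _ =>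
      intro n hn
      have : n = m := by simpa [Trm.fv] using hn
      subst this
      exact (List.getElem?_eq_some_iff.1 hget).1
  | arrI hA hT ih =>
      intro n hn
      simp only [Trm.fv, Set.mem_setOf_eq] at hn
      have := ih (n + 1) hn
      simpa using this
  | arrE hA hB ihA ihB =>
      intro n hn
      simp only [Trm.fv, Set.mem_union] at hn
      rcases hn with hn | hn
      · exact ihA n hn
      · exact ihB n hn
  | allI hfv hT ih => intro n hn; simpa using ih n hn
  | allE G hG hfv hT ih => exact ih

theorem bn_lam {u : Trm} (h : BetaNormal (.lam u)) : BetaNormal u :=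
  fun w hw => h (.lam w) (Beta.lam hw)

theorem bn_app_left {a b : Trm} (h : BetaNormal (.app a b)) : BetaNormal a :=
  fun w hw => h (.app w b) (Beta.appL hw)

theorem bn_neutral : ∀ {a : Trm}, ∀ b : Trm, BetaNormal (.app a b) → Neutral (.app a b) := by
  intro a
  induction a with
  | var n => intro b _; exact Neutral.app (Neutral.var n)
  | app a1 a2 ih =>
      intro b h
      exact Neutral.app (ih a2 (bn_app_left h))
  | lam a1 =>
      intro b h
      exact absurd Beta.beta (h (a1.subst 0 b))


/-- for β-normal t, ⊢_F t : Bool iff t = λx λy y or t = λx λy x. -/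
theorem stmt6 (t : Trm) (hn : BetaNormal t) :
    Typing [] t Bool' ↔ t = .lam (.lam (.var 0)) ∨ t = .lam (.lam (.var 1)) := by
  constructor
  · intro h
    have hB : Typing [] t (Ty.all (.arr (.var 0) (.arr (.var 0) (.var 0)))) := h
    have h0 : Typing [] t (Ty.arr (.var 0) (.arr (.var 0) (.var 0))) := by
      have := Typing.allE (Ty.var 0) trivial (by simp [Ty.tfv]) hB
      simpa [Ty.tsubst, Ty.tliftTimes] using this
    cases t with
    | var n =>
        have := (NEU h0 (Neutral.var n) (by simp)).2
        simp at this
    | app a b =>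
        have := (NEU h0 (bn_neutral b hn) (by simp)).2
        simp at this
    | lam u =>
        have h1 : Typing [Ty.var 0] u (Ty.arr (.var 0) (.var 0)) := by
          have := ML h0 u rfl [] (by intro p hp; cases hp)
            (Ty.var 0) (Ty.arr (.var 0) (.var 0)) (TI.refl _)
          simpa using this
        have hnu : BetaNormal u := bn_lam hn
        have hatom1 : ∀ C ∈ [Ty.var 0], ∃ c, C = Ty.var c := by
          intro C hC; simp at hC; exact ⟨0, hC⟩
        cases u with
        | var n =>
            have := (NEU h1 (Neutral.var n) hatom1).2
            simp at this
        | app a b =>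
            obtain ⟨⟨m, hm⟩, _⟩ := NEU h1 (bn_neutral b hnu) hatom1
            cases hm
        | lam w =>
            have h2 : Typing [Ty.var 0, Ty.var 0] w (Ty.var 0) := by
              have := ML h1 w rfl [] (by intro p hp; cases hp)
                (Ty.var 0) (Ty.var 0) (TI.refl _)
              simpa [smap_nil] using this
            have hnw : BetaNormal w := bn_lam hnu
            have hatom2 : ∀ C ∈ [Ty.var 0, Ty.var 0], ∃ c, C = Ty.var c := by
              intro C hC; simp at hC; rcases hC with rfl | rfl <;> exact ⟨0, rfl⟩
            cases w with
            | var n =>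
                have hlt : n < 2 := by
                  have := FVL h2 n (by simp [Trm.fv])
                  simpa using this
                interval_cases n
                · left; rfl
                · right; rfl
            | app a b =>
                obtain ⟨⟨m, hm⟩, _⟩ := NEU h2 (bn_neutral b hnw) hatom2
                cases hm
            | lam v =>
                exact absurd (Or.inl ⟨0, rfl⟩ : Bad (smap [] (Ty.var 0)))
                  (MLBad h2 v rfl [] (by intro p hp; cases hp))
  · have hax : ∀ n ∈ ({0, 1} : Set ℕ),
        Typing [Ty.var 0, Ty.var 0] (Trm.var n) (Ty.var 0) := by
      intro n hn
      have hprop : ∀ B ∈ [Ty.var 0, Ty.var 0], B.Proper := by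
        intro B hB; simp at hB; rcases hB with rfl | rfl <;> trivial
      rcases hn with rfl | hn
      · exact Typing.ax rfl hprop
      · simp at hn; subst hn; exact Typing.ax rfl hprop
    rintro (rfl | rfl)
    · refine Typing.allI (by simp [Ty.tfv]) ?_
      refine Typing.arrI trivial (Typing.arrI trivial ?_)
      exact hax 0 (by simp)
    · refine Typing.allI (by simp [Ty.tfv]) ?_
      refine Typing.arrI trivial (Typing.arrI trivial ?_)
      exact hax 1 (by simp)
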